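/- arXiv:2406.18799 — 2 statements merged into one kernel-verified Lean document; each statement's English description precedes it below -/
import Mathlib

section
/- Let G be a real number. Define the Wu–Yang south potential A_S on the open set U_S = ℝ³ \ {(0,0,t) : t ≥ 0} (the complement of the nonnegative z-axis) by A_S(x) = (−G / (‖x‖(‖x‖ − x₃))) • (−x₂, x₁, 0). Then A_S is continuously differentiable on U_S and curl A_S(x) = G • x / ‖x‖³ for every x ∈ U_S; i.e., A_S is a nonsingular local potential for the monopole field on its patch. -/
noncomputable section

/-- A point of `ℝ³` from its three coordinates. -/
def vec3 (a b c : ℝ) : EuclideanSpace ℝ (Fin 3) :=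
  (WithLp.equiv 2 (Fin 3 → ℝ)).symm ![a, b, c]

/-- The `i`-th partial derivative of the `j`-th component of a vector field on `ℝ³`. -/
def pderiv3 (A : EuclideanSpace ℝ (Fin 3) → EuclideanSpace ℝ (Fin 3))
    (i j : Fin 3) (x : EuclideanSpace ℝ (Fin 3)) : ℝ :=
  fderiv ℝ (fun y => A y j) x (EuclideanSpace.single i 1)

/-- The curl `(∂₂A₃ − ∂₃A₂, ∂₃A₁ − ∂₁A₃, ∂₁A₂ − ∂₂A₁)` of a vector field on `ℝ³`. -/
def curl (A : EuclideanSpace ℝ (Fin 3) → EuclideanSpace ℝ (Fin 3))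
    (x : EuclideanSpace ℝ (Fin 3)) : EuclideanSpace ℝ (Fin 3) :=
  vec3 (pderiv3 A 1 2 x - pderiv3 A 2 1 x)
    (pderiv3 A 2 0 x - pderiv3 A 0 2 x)
    (pderiv3 A 0 1 x - pderiv3 A 1 0 x)

/-- The monopole field `B_G(x) = G • x / ‖x‖³`. -/
def monopoleField (G : ℝ) (x : EuclideanSpace ℝ (Fin 3)) : EuclideanSpace ℝ (Fin 3) :=
  (‖x‖ ^ 3)⁻¹ • (G • x)

/-- The complement of the nonnegative `z`-axis (a Dirac string). -/
def southPatch : Set (EuclideanSpace ℝ (Fin 3)) :=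
  {x | x 0 = 0 ∧ x 1 = 0 ∧ 0 ≤ x 2}ᶜ

/-- The Wu–Yang south potential `A_S(x) = (−G / (‖x‖(‖x‖ − x₃))) • (−x₂, x₁, 0)`. -/
def wuYangSouth (G : ℝ) (x : EuclideanSpace ℝ (Fin 3)) : EuclideanSpace ℝ (Fin 3) :=
  (-G / (‖x‖ * (‖x‖ - x 2))) • vec3 (-(x 1)) (x 0) 0

local notation "E3" => EuclideanSpace ℝ (Fin 3)

lemma hasFDerivAt_norm' {x : E3} (hx : x ≠ 0) :
    HasFDerivAt (fun y : E3 => ‖y‖) (‖x‖⁻¹ • (innerSL ℝ x : E3 →L[ℝ] ℝ)) x := by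
  have hin : HasFDerivAt (fun y : E3 => (inner ℝ y y : ℝ))
      ((fderivInnerCLM ℝ (x, x)).comp ((ContinuousLinearMap.id ℝ E3).prod
        (ContinuousLinearMap.id ℝ E3))) x :=
    (hasFDerivAt_id x).inner ℝ (hasFDerivAt_id x)
  have hpos : (0:ℝ) < (inner ℝ x x : ℝ) := by
    rw [real_inner_self_eq_norm_sq]
    exact pow_pos (norm_pos_iff.2 hx) 2
  have hne : ‖x‖ ≠ 0 := norm_ne_zero_iff.2 hx
  have hsq : HasDerivAt Real.sqrt (1 / (2 * Real.sqrt (inner ℝ x x : ℝ)))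
      ((fun y : E3 => (inner ℝ y y : ℝ)) x) := Real.hasDerivAt_sqrt hpos.ne'
  have h := hsq.comp_hasFDerivAt (f := fun y : E3 => (inner ℝ y y : ℝ)) x hin
  have hfun : (fun y : E3 => Real.sqrt (inner ℝ y y : ℝ)) = fun y : E3 => ‖y‖ := by
    funext y; rw [real_inner_self_eq_norm_sq, Real.sqrt_sq (norm_nonneg y)]
  rw [show (Real.sqrt ∘ fun y : E3 => (inner ℝ y y : ℝ)) = fun y : E3 => ‖y‖ from hfun] at h
  refine h.congr_fderiv ?_
  ext w
  simp only [ContinuousLinearMap.smul_apply, innerSL_apply_apply, ContinuousLinearMap.coe_smul',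
    Pi.smul_apply, ContinuousLinearMap.coe_comp', Function.comp_apply,
    ContinuousLinearMap.prod_apply, ContinuousLinearMap.coe_id', id_eq,
    fderivInnerCLM_apply, smul_eq_mul]
  rw [real_inner_self_eq_norm_sq, Real.sqrt_sq (norm_nonneg x), real_inner_comm w x]
  field_simp
  ring

/-- The Wu–Yang south potential is a nonsingular `C¹` local potential for the monopole
field on its patch. -/
theorem wuYangSouth_is_local_potential (G : ℝ) :
    ContDiffOn ℝ 1 (wuYangSouth G) southPatch ∧
      ∀ x ∈ southPatch, curl (wuYangSouth G) x = monopoleField G x := by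
  have hc : ∀ i : Fin 3, Continuous fun y : E3 => y i :=
    fun i => (EuclideanSpace.proj (𝕜 := ℝ) i).continuous
  have hopen : IsOpen southPatch := by
    have hclosed : IsClosed {x : E3 | x 0 = 0 ∧ x 1 = 0 ∧ 0 ≤ x 2} :=
      (isClosed_eq (hc 0) continuous_const).inter
        ((isClosed_eq (hc 1) continuous_const).inter (isClosed_le continuous_const (hc 2)))
    exact hclosed.isOpen_compl
  -- basic facts at a point of the patch
  have basic : ∀ x ∈ southPatch, x ≠ 0 ∧ 0 < ‖x‖ - x 2 := by
    intro x hx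
    have hsq : ‖x‖ ^ 2 = x 0 ^ 2 + x 1 ^ 2 + x 2 ^ 2 := by
      rw [EuclideanSpace.norm_eq, Real.sq_sqrt (by positivity)]
      simp [Fin.sum_univ_three, Real.norm_eq_abs, sq_abs]
    have hx' : ¬(x 0 = 0 ∧ x 1 = 0 ∧ 0 ≤ x 2) := hx
    have hx0 : x ≠ 0 := by
      rintro rfl
      exact hx' ⟨rfl, rfl, le_refl _⟩
    refine ⟨hx0, ?_⟩
    rcases lt_or_ge (x 2) 0 with h2 | h2
    · have := norm_nonneg x; linarith
    · have h01 : x 0 ≠ 0 ∨ x 1 ≠ 0 := by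
        by_contra h
        push_neg at h
        exact hx' ⟨h.1, h.2, h2⟩
      have hpos : 0 < x 0 ^ 2 + x 1 ^ 2 := by
        rcases h01 with h | h <;> positivity
      nlinarith [norm_nonneg x]
  constructor
  · rw [hopen.contDiffOn_iff]
    intro x hx
    obtain ⟨hx0, hrz⟩ := basic x hx
    have hr : 0 < ‖x‖ := norm_pos_iff.2 hx0
    have hD : ‖x‖ * (‖x‖ - x 2) ≠ 0 := by positivity
    have hv : ContDiff ℝ 1 fun y : E3 => vec3 (-(y 1)) (y 0) 0 := by
      rw [contDiff_euclidean]
      intro i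
      fin_cases i
      · exact ((EuclideanSpace.proj (𝕜 := ℝ) (1 : Fin 3)).contDiff).neg
      · exact (EuclideanSpace.proj (𝕜 := ℝ) (0 : Fin 3)).contDiff
      · exact contDiff_const
    have hs : ContDiffAt ℝ 1 (fun y : E3 => -G / (‖y‖ * (‖y‖ - y 2))) x := by
      refine ContDiffAt.div contDiffAt_const ?_ hD
      exact ((contDiffAt_norm ℝ hx0).mul
        ((contDiffAt_norm ℝ hx0).sub ((EuclideanSpace.proj (𝕜 := ℝ) (2 : Fin 3)).contDiff.contDiffAt)))
    exact hs.smul hv.contDiffAt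
  · intro x hx
    obtain ⟨hx0, hrz⟩ := basic x hx
    have hr : 0 < ‖x‖ := norm_pos_iff.2 hx0
    have hrne : ‖x‖ ≠ 0 := hr.ne'
    have hrzne : ‖x‖ - x 2 ≠ 0 := hrz.ne'
    have hD : ‖x‖ * (‖x‖ - x 2) ≠ 0 := by positivity
    have hsq : ‖x‖ ^ 2 = x 0 ^ 2 + x 1 ^ 2 + x 2 ^ 2 := by
      rw [EuclideanSpace.norm_eq, Real.sq_sqrt (by positivity)]
      simp [Fin.sum_univ_three, Real.norm_eq_abs, sq_abs]
    have hnorm := hasFDerivAt_norm' hx0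
    have hproj : ∀ j : Fin 3, HasFDerivAt (fun y : E3 => y j) (EuclideanSpace.proj (𝕜 := ℝ) j) x :=
      fun j => (EuclideanSpace.proj (𝕜 := ℝ) j).hasFDerivAt
    have hden := hnorm.mul (hnorm.sub (hproj 2))
    have hinv := (hasFDerivAt_inv' (𝕜 := ℝ) hD).comp x hden
    have hS := hinv.const_mul (-G)
    have h0 := hS.mul (hproj 1).neg
    have h1 := hS.mul (hproj 0)
    simp only [Function.comp_def] at h0 h1
    -- component 2 of A is the zero function
    have h2 : ∀ i : Fin 3, pderiv3 (wuYangSouth G) i 2 x = 0 := by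
      intro i
      rw [pderiv3, show (fun y : E3 => wuYangSouth G y 2) = fun _ => (0:ℝ) by
        funext y; show -G / (‖y‖ * (‖y‖ - y 2)) * 0 = 0; ring]
      simp
    have pd0 : ∀ i : Fin 3, pderiv3 (wuYangSouth G) i 0 x =
        (-G * (‖x‖ * (‖x‖ - x 2))⁻¹ * -if (1:Fin 3) = i then 1 else 0) +
          -x 1 * (-G * -((‖x‖ * (‖x‖ - x 2))⁻¹ *
            (‖x‖ * (‖x‖⁻¹ * (1 * x i) - if (2:Fin 3) = i then 1 else 0) +
              (‖x‖ - x 2) * (‖x‖⁻¹ * (1 * x i))) * (‖x‖ * (‖x‖ - x 2))⁻¹)) := by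
      intro i
      rw [pderiv3, show (fun y : E3 => wuYangSouth G y 0)
          = fun y => -G * (‖y‖ * (‖y‖ - y 2))⁻¹ * (-(y 1)) from rfl,
          show fderiv ℝ (fun y : E3 => -G * (‖y‖ * (‖y‖ - y 2))⁻¹ * (-(y 1))) x = _ from h0.fderiv]
      simp only [ContinuousLinearMap.add_apply, ContinuousLinearMap.smul_apply,
        ContinuousLinearMap.sub_apply, ContinuousLinearMap.neg_apply,
        ContinuousLinearMap.coe_smul', Pi.smul_apply, innerSL_apply_apply, PiLp.proj_apply,
        EuclideanSpace.inner_single_right, EuclideanSpace.single_apply, smul_eq_mul, map_zero,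
        ContinuousLinearMap.coe_comp', Function.comp_apply,
        ContinuousLinearMap.mulLeftRight_apply, starRingEnd_apply, star_trivial,
        Pi.mul_apply, Pi.sub_apply, Pi.neg_apply]
    have pd1 : ∀ i : Fin 3, pderiv3 (wuYangSouth G) i 1 x =
        (-G * (‖x‖ * (‖x‖ - x 2))⁻¹ * if (0:Fin 3) = i then 1 else 0) +
          x 0 * (-G * -((‖x‖ * (‖x‖ - x 2))⁻¹ *
            (‖x‖ * (‖x‖⁻¹ * (1 * x i) - if (2:Fin 3) = i then 1 else 0) +
              (‖x‖ - x 2) * (‖x‖⁻¹ * (1 * x i))) * (‖x‖ * (‖x‖ - x 2))⁻¹)) := by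
      intro i
      rw [pderiv3, show (fun y : E3 => wuYangSouth G y 1)
          = fun y => -G * (‖y‖ * (‖y‖ - y 2))⁻¹ * (y 0) from rfl,
          show fderiv ℝ (fun y : E3 => -G * (‖y‖ * (‖y‖ - y 2))⁻¹ * (y 0)) x = _ from h1.fderiv]
      simp only [ContinuousLinearMap.add_apply, ContinuousLinearMap.smul_apply,
        ContinuousLinearMap.sub_apply, ContinuousLinearMap.neg_apply,
        ContinuousLinearMap.coe_smul', Pi.smul_apply, innerSL_apply_apply, PiLp.proj_apply,
        EuclideanSpace.inner_single_right, EuclideanSpace.single_apply, smul_eq_mul, map_zero,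
        ContinuousLinearMap.coe_comp', Function.comp_apply,
        ContinuousLinearMap.mulLeftRight_apply, starRingEnd_apply, star_trivial,
        Pi.mul_apply, Pi.sub_apply, Pi.neg_apply]
    have hgoal : ∀ j : Fin 3, curl (wuYangSouth G) x j = monopoleField G x j := by
      intro j
      fin_cases j
      · show pderiv3 (wuYangSouth G) 1 2 x - pderiv3 (wuYangSouth G) 2 1 x
          = (‖x‖ ^ 3)⁻¹ * (G * x 0)
        rw [h2, pd1]
        simp only [Fin.reduceEq, reduceIte]
        field_simp
        ring
      · show pderiv3 (wuYangSouth G) 2 0 x - pderiv3 (wuYangSouth G) 0 2 x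
          = (‖x‖ ^ 3)⁻¹ * (G * x 1)
        rw [h2, pd0]
        simp only [Fin.reduceEq, reduceIte]
        field_simp
        ring
      · show pderiv3 (wuYangSouth G) 0 1 x - pderiv3 (wuYangSouth G) 1 0 x
          = (‖x‖ ^ 3)⁻¹ * (G * x 2)
        rw [pd0, pd1]
        simp only [Fin.reduceEq, reduceIte]
        field_simp
        linear_combination (-(G * (2*‖x‖ - x 2))) * hsq
    ext j
    exact hgoal j
end
end

section
/- Let G be a real number, and let A_N(x) = (G / (‖x‖(‖x‖ + x₃))) • (−x₂, x₁, 0) and A_S(x) = (−G / (‖x‖(‖x‖ − x₃))) • (−x₂, x₁, 0) be the Wu–Yang potentials. On the overlap of their domains, namely the complement of the full z-axis {x : x₁ = x₂ = 0} in ℝ³, the two potentials differ by the pure-gauge field: A_N(x) − A_S(x) = (2G / (x₁² + x₂²)) • (−x₂, x₁, 0), and this difference field has vanishing curl at every point of the overlap. -/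
noncomputable section

/-- The Wu–Yang north potential `A_N(x) = (G / (‖x‖(‖x‖ + x₃))) • (−x₂, x₁, 0)`. -/
def wuYangNorth (G : ℝ) (x : EuclideanSpace ℝ (Fin 3)) : EuclideanSpace ℝ (Fin 3) :=
  (G / (‖x‖ * (‖x‖ + x 2))) • vec3 (-(x 1)) (x 0) 0

/-- The pure-gauge difference field `W(x) = (2G / (x₁² + x₂²)) • (−x₂, x₁, 0)`. -/
def gaugeDiff (G : ℝ) (x : EuclideanSpace ℝ (Fin 3)) : EuclideanSpace ℝ (Fin 3) :=
  (2 * G / ((x 0) ^ 2 + (x 1) ^ 2)) • vec3 (-(x 1)) (x 0) 0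

namespace WuYangAux

abbrev E3 := EuclideanSpace ℝ (Fin 3)

lemma fderiv_gd1 (G : ℝ) (x : E3) (hne : (x 0)*(x 0) + (x 1)*(x 1) ≠ 0) (i : Fin 3) :
    fderiv ℝ (fun y => gaugeDiff G y 1) x (EuclideanSpace.single i 1)
      = (2*G*((x 1)^2 - (x 0)^2)/((x 0)^2+(x 1)^2)^2) * (EuclideanSpace.single i 1 0)
        + (-(4*G)*((x 0)*(x 1))/((x 0)^2+(x 1)^2)^2) * (EuclideanSpace.single i 1 1) := by
  have hp0 : HasFDerivAt (fun y : E3 => y 0) (EuclideanSpace.proj (𝕜 := ℝ) 0) x := by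
    exact (EuclideanSpace.proj (𝕜 := ℝ) (0 : Fin 3)).hasFDerivAt
  have hp1 : HasFDerivAt (fun y : E3 => y 1) (EuclideanSpace.proj (𝕜 := ℝ) 1) x := by
    exact (EuclideanSpace.proj (𝕜 := ℝ) (1 : Fin 3)).hasFDerivAt
  have hs := (hp0.mul hp0).add (hp1.mul hp1)
  have hinv := ((hasDerivAt_inv hne).comp_hasFDerivAt x hs).const_mul (2*G)
  have h1 := hinv.mul hp0
  have e1 : (fun y : E3 => gaugeDiff G y 1)
      = fun y : E3 => 2 * G * ((fun z => z⁻¹) ∘ fun w : E3 => w 0 * w 0 + w 1 * w 1) y * y 0 := by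
    funext y
    simp only [gaugeDiff, vec3, Function.comp_apply, PiLp.smul_apply,
      WithLp.equiv_symm_apply, WithLp.ofLp_toLp, smul_eq_mul, Matrix.cons_val_one, Matrix.head_cons, Matrix.cons_val_zero,
      div_eq_mul_inv]
    ring_nf
  rw [e1, HasFDerivAt.fderiv (f := fun y : E3 => 2 * G * ((fun z => z⁻¹) ∘ fun w : E3 => w 0 * w 0 + w 1 * w 1) y * y 0) h1]
  have hne' : (x 0)^2 + (x 1)^2 ≠ 0 := by simpa [pow_two] using hne
  simp [Function.comp, ContinuousLinearMap.add_apply, ContinuousLinearMap.smul_apply,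
    EuclideanSpace.single_apply]
  fin_cases i <;> simp <;> field_simp <;> ring

lemma fderiv_gd0 (G : ℝ) (x : E3) (hne : (x 0)*(x 0) + (x 1)*(x 1) ≠ 0) (i : Fin 3) :
    fderiv ℝ (fun y => gaugeDiff G y 0) x (EuclideanSpace.single i 1)
      = ((4*G)*((x 0)*(x 1))/((x 0)^2+(x 1)^2)^2) * (EuclideanSpace.single i 1 0)
        + (2*G*((x 1)^2 - (x 0)^2)/((x 0)^2+(x 1)^2)^2) * (EuclideanSpace.single i 1 1) := by
  have hp0 : HasFDerivAt (fun y : E3 => y 0) (EuclideanSpace.proj (𝕜 := ℝ) 0) x := by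
    exact (EuclideanSpace.proj (𝕜 := ℝ) (0 : Fin 3)).hasFDerivAt
  have hp1 : HasFDerivAt (fun y : E3 => y 1) (EuclideanSpace.proj (𝕜 := ℝ) 1) x := by
    exact (EuclideanSpace.proj (𝕜 := ℝ) (1 : Fin 3)).hasFDerivAt
  have hs := (hp0.mul hp0).add (hp1.mul hp1)
  have hinv := ((hasDerivAt_inv hne).comp_hasFDerivAt x hs).const_mul (2*G)
  have h0 := hinv.mul hp1.neg
  have e0 : (fun y : E3 => gaugeDiff G y 0)
      = fun y : E3 => 2 * G * ((fun z => z⁻¹) ∘ fun w : E3 => w 0 * w 0 + w 1 * w 1) y * (-(y 1)) := by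
    funext y
    simp only [gaugeDiff, vec3, Function.comp_apply, PiLp.smul_apply,
      WithLp.equiv_symm_apply, WithLp.ofLp_toLp, smul_eq_mul, Matrix.cons_val_zero, div_eq_mul_inv]
    ring_nf
  rw [e0, HasFDerivAt.fderiv (f := fun y : E3 => 2 * G * ((fun z => z⁻¹) ∘ fun w : E3 => w 0 * w 0 + w 1 * w 1) y * (-(y 1))) h0]
  have hne' : (x 0)^2 + (x 1)^2 ≠ 0 := by simpa [pow_two] using hne
  simp [Function.comp, ContinuousLinearMap.add_apply, ContinuousLinearMap.smul_apply,
    EuclideanSpace.single_apply]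
  fin_cases i <;> simp <;> field_simp <;> ring

lemma fderiv_gd2 (G : ℝ) (x : E3) (i : Fin 3) :
    fderiv ℝ (fun y => gaugeDiff G y 2) x (EuclideanSpace.single i 1) = 0 := by
  have e2 : (fun y : E3 => gaugeDiff G y 2) = fun _ => (0 : ℝ) := by
    funext y
    simp [gaugeDiff, vec3, WithLp.equiv_symm_apply, WithLp.ofLp_toLp]
  rw [e2, fderiv_fun_const]
  simp

end WuYangAux

open WuYangAux in
/-- On the overlap of their domains (the complement of the full `z`-axis), the Wu–Yang
potentials differ by the pure-gauge field, and this difference field is curl-free there. -/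
theorem wuYang_gauge_difference (G : ℝ) :
    ∀ x : EuclideanSpace ℝ (Fin 3), ¬ (x 0 = 0 ∧ x 1 = 0) →
      wuYangNorth G x - wuYangSouth G x = gaugeDiff G x ∧
        curl (gaugeDiff G) x = 0 := by
  intro x h
  have h0 : 0 < (x 0)^2 + (x 1)^2 := by
    rcases not_and_or.mp h with h' | h'
    · exact add_pos_of_pos_of_nonneg (pow_two_pos_of_ne_zero h') (sq_nonneg _)
    · exact add_pos_of_nonneg_of_pos (sq_nonneg _) (pow_two_pos_of_ne_zero h')
  have hr2 : ‖x‖^2 = (x 0)^2 + (x 1)^2 + (x 2)^2 := by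
    rw [EuclideanSpace.norm_eq, Real.sq_sqrt (by positivity)]
    simp [Fin.sum_univ_three, sq_abs]
  have hrpos : 0 < ‖x‖ := by
    have := norm_nonneg x
    nlinarith
  have hplus : 0 < ‖x‖ + x 2 := by nlinarith
  have hminus : 0 < ‖x‖ - x 2 := by nlinarith
  constructor
  · rw [wuYangNorth, wuYangSouth, gaugeDiff, ← sub_smul]
    congr 1
    rw [div_sub_div _ _ (by positivity) (by positivity), div_eq_div_iff (by positivity) (by nlinarith)]
    linear_combination (-(2*G*‖x‖^2)) * hr2
  · have hne : (x 0)*(x 0) + (x 1)*(x 1) ≠ 0 := by nlinarith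
    have hne' : (x 0)^2 + (x 1)^2 ≠ 0 := ne_of_gt h0
    show vec3 _ _ _ = 0
    have p12 : pderiv3 (gaugeDiff G) 1 2 x = 0 := fderiv_gd2 G x 1
    have p02 : pderiv3 (gaugeDiff G) 0 2 x = 0 := fderiv_gd2 G x 0
    have p21 : pderiv3 (gaugeDiff G) 2 1 x = 0 := by
      rw [pderiv3, fderiv_gd1 G x hne 2]
      simp [EuclideanSpace.single_apply]
    have p20 : pderiv3 (gaugeDiff G) 2 0 x = 0 := by
      rw [pderiv3, fderiv_gd0 G x hne 2]
      simp [EuclideanSpace.single_apply]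
    have p01 : pderiv3 (gaugeDiff G) 0 1 x
        = 2*G*((x 1)^2 - (x 0)^2)/((x 0)^2+(x 1)^2)^2 := by
      rw [pderiv3, fderiv_gd1 G x hne 0]
      simp [EuclideanSpace.single_apply]
    have p10 : pderiv3 (gaugeDiff G) 1 0 x
        = 2*G*((x 1)^2 - (x 0)^2)/((x 0)^2+(x 1)^2)^2 := by
      rw [pderiv3, fderiv_gd0 G x hne 1]
      simp [EuclideanSpace.single_apply]
    rw [p12, p21, p20, p02, p01, p10]
    ext j
    fin_cases j <;> simp [vec3, WithLp.equiv_symm_apply, WithLp.ofLp_toLp]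
end
end
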